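/- The second moment of the Abelian distribution with parameters N and p satisfies E(Z_{N,p}^2) = (C_{N,p}/p) * [1/(1-Np) - 1 - Σ_{i=1}^{N-1} ((N-1)!/(N-1-i)!) * p^i]. -/

import Mathlib

open Finset

lemma sum_choose_sub (m : ℕ) (f : ℕ → ℝ) :
    ∑ k ∈ range (m+2), (-1:ℝ)^k * ((m+1).choose k : ℝ) * f k
      = ∑ k ∈ range (m+1), (-1:ℝ)^k * (m.choose k : ℝ) * (f k - f (k+1)) := by
  set P := ∑ k ∈ range (m+1), (-1:ℝ)^k * (m.choose k : ℝ) * f k with hP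
  set Q := ∑ k ∈ range (m+1), (-1:ℝ)^k * (m.choose k : ℝ) * f (k+1) with hQ
  set R := ∑ k ∈ range (m+1), (-1:ℝ)^k * (m.choose (k+1) : ℝ) * f (k+1) with hR
  have hkey : P = f 0 - R := by
    rw [hP, Finset.sum_range_succ' (fun k => (-1:ℝ)^k * (m.choose k : ℝ) * f k) m]
    have h2 : R = ∑ k ∈ range m, (-1:ℝ)^k * (m.choose (k+1) : ℝ) * f (k+1) := by
      rw [hR, Finset.sum_range_succ]; simp
    rw [h2]
    simp only [pow_succ, pow_zero, Nat.choose_zero_right, Nat.cast_one, one_mul]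
    have h3 : ∑ x ∈ range m, (-1:ℝ)^x * -1 * (m.choose (x+1) : ℝ) * f (x+1)
        = -∑ k ∈ range m, (-1:ℝ)^k * (m.choose (k+1) : ℝ) * f (k+1) := by
      rw [← Finset.sum_neg_distrib]
      exact Finset.sum_congr rfl fun k _ => by ring
    rw [h3]
    ring
  have hA : ∑ k ∈ range (m+2), (-1:ℝ)^k * ((m+1).choose k : ℝ) * f k
      = -Q - R + f 0 := by
    rw [Finset.sum_range_succ' (fun k => (-1:ℝ)^k * ((m+1).choose k : ℝ) * f k) (m+1)]
    have : ∀ k, (-1:ℝ)^(k+1) * ((m+1).choose (k+1) : ℝ) * f (k+1)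
        = -((-1:ℝ)^k * (m.choose k : ℝ) * f (k+1))
          - (-1:ℝ)^k * (m.choose (k+1) : ℝ) * f (k+1) := by
      intro k
      rw [Nat.choose_succ_succ]
      push_cast
      ring
    rw [Finset.sum_congr rfl (fun k _ => this k)]
    rw [Finset.sum_sub_distrib, Finset.sum_neg_distrib]
    simp only [Nat.choose_zero_right, Nat.cast_one, pow_zero, one_mul]
    rfl
  have hB : ∑ k ∈ range (m+1), (-1:ℝ)^k * (m.choose k : ℝ) * (f k - f (k+1))
      = P - Q := by
    rw [hP, hQ, ← Finset.sum_sub_distrib]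
    apply Finset.sum_congr rfl
    intro k _
    ring
  rw [hA, hB, hkey]
  ring

/-- Finite differences of a polynomial `(x + k z)^d`. -/
lemma fd (z : ℝ) : ∀ m : ℕ, ∀ d : ℕ, d ≤ m → ∀ x : ℝ,
    ∑ k ∈ range (m+1), (-1:ℝ)^k * (m.choose k : ℝ) * (x + k*z)^d
      = if d = m then (-1:ℝ)^m * (m.factorial : ℝ) * z^m else 0 := by
  intro m
  induction m with
  | zero =>
    intro d hd x
    interval_cases d
    simp
  | succ m ih =>
    intro d hd x
    rw [sum_choose_sub m (fun k => (x + k*z)^d)]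
    have expand : ∀ k : ℕ, (x + (k:ℝ)*z)^d - (x + ((k:ℕ)+1:ℕ)*z)^d
        = ∑ e ∈ range d, -((d.choose e : ℝ) * z^(d-e) * (x + k*z)^e) := by
      intro k
      have h1 : (x + ((k:ℕ)+1:ℕ)*z) = (x + (k:ℝ)*z) + z := by push_cast; ring
      rw [h1, add_pow (x + (k:ℝ)*z) z d]
      rw [Finset.sum_range_succ]
      simp only [Nat.choose_self, Nat.cast_one, Nat.sub_self, pow_zero, mul_one]
      rw [show ∑ e ∈ range d, -((d.choose e : ℝ) * z^(d-e) * (x + (k:ℝ)*z)^e)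
          = -∑ e ∈ range d, (x + (k:ℝ)*z)^e * z^(d-e) * (d.choose e : ℝ) from by
        rw [← Finset.sum_neg_distrib]
        exact Finset.sum_congr rfl fun e _ => by ring]
      ring
    calc ∑ k ∈ range (m+1), (-1:ℝ)^k * (m.choose k : ℝ)
            * ((x + k*z)^d - (x + ((k+1:ℕ):ℝ)*z)^d)
        = ∑ k ∈ range (m+1), ∑ e ∈ range d,
            -((d.choose e : ℝ) * z^(d-e) * ((-1:ℝ)^k * (m.choose k : ℝ) * (x + k*z)^e)) := by
          apply Finset.sum_congr rfl
          intro k _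
          rw [expand k, Finset.mul_sum]
          apply Finset.sum_congr rfl
          intro e _
          ring
      _ = ∑ e ∈ range d, -((d.choose e : ℝ) * z^(d-e)
            * ∑ k ∈ range (m+1), (-1:ℝ)^k * (m.choose k : ℝ) * (x + k*z)^e) := by
          rw [Finset.sum_comm]
          apply Finset.sum_congr rfl
          intro e _
          rw [Finset.mul_sum, ← Finset.sum_neg_distrib]
      _ = if d = m + 1 then (-1:ℝ)^(m+1) * ((m+1).factorial : ℝ) * z^(m+1) else 0 := by
          by_cases hdm : d = m + 1
          · subst hdm
            rw [Finset.sum_eq_single m]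
            · rw [ih m le_rfl x]
              simp only [eq_self_iff_true, if_true]
              have : ((m+1).choose m : ℝ) = (m+1 : ℝ) := by
                rw [Nat.choose_succ_self_right]; push_cast; ring
              rw [this]
              rw [show (m+1) - m = 1 by omega]
              have : ((m+1).factorial : ℝ) = (m+1 : ℝ) * (m.factorial : ℝ) := by
                rw [Nat.factorial_succ]; push_cast; ring
              rw [this]
              ring
            · intro e he hne
              rw [ih e (by simp at he; omega) x, if_neg (by omega)]
              ring
            · intro h
              exact absurd (Finset.self_mem_range_succ m) h
          · have : ∀ e ∈ range d, -((d.choose e : ℝ) * z^(d-e)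
                * ∑ k ∈ range (m+1), (-1:ℝ)^k * (m.choose k : ℝ) * (x + k*z)^e) = 0 := by
              intro e he
              simp only [Finset.mem_range] at he
              rw [ih e (by omega) x, if_neg (by omega)]
              ring
            rw [Finset.sum_congr rfl this, Finset.sum_const_zero, if_neg hdm]

lemma choose_swap {n k j : ℕ} (hk : k ≤ n) (hj : j ≤ n) :
    n.choose k * (n-k).choose j = n.choose j * (n-j).choose k := by
  by_cases h : k + j ≤ n
  · have e1 := Nat.choose_mul_factorial_mul_factorial hk
    have e2 := Nat.choose_mul_factorial_mul_factorial (show j ≤ n - k by omega)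
    have e3 := Nat.choose_mul_factorial_mul_factorial hj
    have e4 := Nat.choose_mul_factorial_mul_factorial (show k ≤ n - j by omega)
    have hnn : n - k - j = n - j - k := by omega
    apply Nat.eq_of_mul_eq_mul_right
      (show 0 < k.factorial * (j.factorial * (n-k-j).factorial) by positivity)
    calc n.choose k * (n-k).choose j * (k.factorial * (j.factorial * (n-k-j).factorial))
        = (n.choose k * k.factorial) * ((n-k).choose j * j.factorial * (n-k-j).factorial) := by
          ring
      _ = (n.choose k * k.factorial) * (n-k).factorial := by rw [e2]
      _ = n.factorial := by rw [← e1]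
      _ = (n.choose j * j.factorial) * (n-j).factorial := by rw [← e3]
      _ = (n.choose j * j.factorial) * ((n-j).choose k * k.factorial * (n-j-k).factorial) := by
          rw [e4]
      _ = n.choose j * (n-j).choose k * (k.factorial * (j.factorial * (n-k-j).factorial)) := by
          rw [hnn]; ring
  · rw [Nat.choose_eq_zero_of_lt (show n - k < j by omega),
      Nat.choose_eq_zero_of_lt (show n - j < k by omega)]
    ring

lemma Fsum (n : ℕ) (x y z : ℝ) :
    ∑ k ∈ range (n+1), (n.choose k : ℝ) * (y + k*z)^k * (x - k*z)^(n-k)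
      = ∑ i ∈ range (n+1), (n.choose i : ℝ) * (i.factorial : ℝ) * z^i * (x+y)^(n-i) := by
  have hexp : ∀ k ∈ range (n+1),
      (n.choose k : ℝ) * (y + k*z)^k * (x - k*z)^(n-k)
        = ∑ j ∈ range (n+1), (n.choose k : ℝ) * ((n-k).choose j : ℝ) * (x+y)^j
            * (-1:ℝ)^(n-k-j) * (y+k*z)^(n-j) := by
    intro k hk
    simp only [Finset.mem_range] at hk
    have hk' : k ≤ n := by omega
    have h1 : x - k*z = (x+y) + (-(y+k*z)) := by ring
    calc (n.choose k : ℝ) * (y + k*z)^k * (x - k*z)^(n-k)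
        = ∑ j ∈ range (n-k+1), (n.choose k : ℝ) * (y + k*z)^k
            * ((x+y)^j * (-(y+k*z))^(n-k-j) * ((n-k).choose j : ℝ)) := by
          rw [h1, add_pow (x+y) (-(y+k*z)) (n-k), Finset.mul_sum]
      _ = ∑ j ∈ range (n-k+1), (n.choose k : ℝ) * ((n-k).choose j : ℝ) * (x+y)^j
            * (-1:ℝ)^(n-k-j) * (y+k*z)^(n-j) := by
          apply Finset.sum_congr rfl
          intro j hj
          simp only [Finset.mem_range] at hj
          have he : (y+k*z)^(n-j) = (y+k*z)^k * (y+k*z)^(n-k-j) := by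
            rw [← pow_add]
            congr 1
            omega
          rw [neg_pow, he]
          ring
      _ = ∑ j ∈ range (n+1), (n.choose k : ℝ) * ((n-k).choose j : ℝ) * (x+y)^j
            * (-1:ℝ)^(n-k-j) * (y+k*z)^(n-j) := by
          apply Finset.sum_subset (Finset.range_subset_range.mpr (by omega : n-k+1 ≤ n+1))
          intro j hj hnj
          simp only [Finset.mem_range] at hj hnj
          rw [Nat.choose_eq_zero_of_lt (show n - k < j by omega)]
          push_cast
          ring
  rw [Finset.sum_congr rfl hexp, Finset.sum_comm]
  have hinner : ∀ j ∈ range (n+1),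
      ∑ k ∈ range (n+1), (n.choose k : ℝ) * ((n-k).choose j : ℝ) * (x+y)^j
          * (-1:ℝ)^(n-k-j) * (y+k*z)^(n-j)
        = (n.choose j : ℝ) * ((n-j).factorial : ℝ) * z^(n-j) * (x+y)^j := by
    intro j hj
    simp only [Finset.mem_range] at hj
    have hj' : j ≤ n := by omega
    have step1 : ∀ k ∈ range (n+1),
        (n.choose k : ℝ) * ((n-k).choose j : ℝ) * (x+y)^j * (-1:ℝ)^(n-k-j) * (y+k*z)^(n-j)
          = ((n.choose j : ℝ) * (x+y)^j * (-1:ℝ)^(n-j))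
              * ((-1:ℝ)^k * ((n-j).choose k : ℝ) * (y+k*z)^(n-j)) := by
      intro k hk
      simp only [Finset.mem_range] at hk
      have hk' : k ≤ n := by omega
      by_cases hkj : k + j ≤ n
      · have hcs : ((n.choose k : ℝ) * ((n-k).choose j : ℝ))
            = (n.choose j : ℝ) * ((n-j).choose k : ℝ) := by
          exact_mod_cast congrArg (Nat.cast (R := ℝ)) (choose_swap hk' hj')
        have hsign : (-1:ℝ)^(n-k-j) = (-1:ℝ)^(n-j) * (-1:ℝ)^k := by
          have h1 : (-1:ℝ)^(n-k-j) * (-1:ℝ)^k = (-1:ℝ)^(n-j) := by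
            rw [← pow_add, show n-k-j+k = n-j from by omega]
          have h2 : ((-1:ℝ)^k) * ((-1:ℝ)^k) = 1 := by
            rw [← pow_add]
            exact Even.neg_one_pow ⟨k, rfl⟩
          calc (-1:ℝ)^(n-k-j) = (-1:ℝ)^(n-k-j) * (((-1:ℝ)^k) * ((-1:ℝ)^k)) := by
                rw [h2]; ring
            _ = (-1:ℝ)^(n-j) * (-1:ℝ)^k := by rw [← mul_assoc, h1]
        rw [hsign]
        rw [show (n.choose k : ℝ) * ((n-k).choose j : ℝ) * (x+y)^j
            * ((-1:ℝ)^(n-j) * (-1:ℝ)^k) * (y+k*z)^(n-j)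
            = ((n.choose k : ℝ) * ((n-k).choose j : ℝ)) * ((x+y)^j
            * ((-1:ℝ)^(n-j) * (-1:ℝ)^k) * (y+k*z)^(n-j)) from by ring, hcs]
        ring
      · rw [Nat.choose_eq_zero_of_lt (show n - k < j by omega),
          Nat.choose_eq_zero_of_lt (show n - j < k by omega)]
        push_cast
        ring
    rw [Finset.sum_congr rfl step1, ← Finset.mul_sum]
    have step2 : ∑ k ∈ range (n+1), (-1:ℝ)^k * ((n-j).choose k : ℝ) * (y+k*z)^(n-j)
        = (-1:ℝ)^(n-j) * ((n-j).factorial : ℝ) * z^(n-j) := by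
      rw [show ∑ k ∈ range (n+1), (-1:ℝ)^k * ((n-j).choose k : ℝ) * (y+k*z)^(n-j)
          = ∑ k ∈ range (n-j+1), (-1:ℝ)^k * ((n-j).choose k : ℝ) * (y+k*z)^(n-j) from by
        symm
        apply Finset.sum_subset (Finset.range_subset_range.mpr (by omega : n-j+1 ≤ n+1))
        intro k hk hnk
        simp only [Finset.mem_range] at hk hnk
        rw [Nat.choose_eq_zero_of_lt (show n - j < k by omega)]
        push_cast
        ring]
      rw [fd z (n-j) (n-j) le_rfl y, if_pos rfl]
    rw [step2]
    have h2 : (-1:ℝ)^(n-j) * ((-1:ℝ)^(n-j)) = 1 := by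
      rw [← pow_add]
      exact Even.neg_one_pow ⟨n-j, rfl⟩
    calc (n.choose j : ℝ) * (x+y)^j * (-1:ℝ)^(n-j)
          * ((-1:ℝ)^(n-j) * ((n-j).factorial : ℝ) * z^(n-j))
        = ((-1:ℝ)^(n-j) * ((-1:ℝ)^(n-j)))
            * ((n.choose j : ℝ) * (x+y)^j * ((n-j).factorial : ℝ) * z^(n-j)) := by ring
      _ = (n.choose j : ℝ) * ((n-j).factorial : ℝ) * z^(n-j) * (x+y)^j := by
          rw [h2]; ring
  rw [Finset.sum_congr rfl hinner]
  rw [show ∑ i ∈ range (n+1), (n.choose i : ℝ) * (i.factorial : ℝ) * z^i * (x+y)^(n-i)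
      = ∑ j ∈ range (n+1), (n.choose (n-j) : ℝ) * ((n-j).factorial : ℝ) * z^(n-j)
          * (x+y)^(n-(n-j)) from by
    rw [← Finset.sum_range_reflect]
    apply Finset.sum_congr rfl
    intro j hj
    simp only [Finset.mem_range] at hj
    rw [show n + 1 - 1 - j = n - j from by omega]]
  apply Finset.sum_congr rfl
  intro j hj
  simp only [Finset.mem_range] at hj
  rw [Nat.choose_symm (by omega : j ≤ n), show n - (n-j) = j from by omega]

lemma abelY (n : ℕ) (x y z : ℝ) :
    y * ∑ k ∈ Icc 1 n, (n.choose k : ℝ) * (y+k*z)^(k-1) * (x-k*z)^(n-k)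
      = (x+y)^n - x^n := by
  rw [Finset.mul_sum]
  have hexp : ∀ k ∈ Icc 1 n,
      y * ((n.choose k : ℝ) * (y+k*z)^(k-1) * (x-k*z)^(n-k))
        = ∑ j ∈ range (n+1), (n.choose k : ℝ) * ((n-k).choose j : ℝ) * (x+y)^j
            * (-1:ℝ)^(n-k-j) * y * (y+k*z)^(n-1-j) := by
    intro k hk
    simp only [Finset.mem_Icc] at hk
    obtain ⟨hk1, hk'⟩ := hk
    have h1 : x - k*z = (x+y) + (-(y+k*z)) := by ring
    calc y * ((n.choose k : ℝ) * (y+k*z)^(k-1) * (x-k*z)^(n-k))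
        = ∑ j ∈ range (n-k+1), y * ((n.choose k : ℝ) * (y + k*z)^(k-1)
            * ((x+y)^j * (-(y+k*z))^(n-k-j) * ((n-k).choose j : ℝ))) := by
          rw [h1, add_pow (x+y) (-(y+k*z)) (n-k), Finset.mul_sum, Finset.mul_sum]
      _ = ∑ j ∈ range (n-k+1), (n.choose k : ℝ) * ((n-k).choose j : ℝ) * (x+y)^j
            * (-1:ℝ)^(n-k-j) * y * (y+k*z)^(n-1-j) := by
          apply Finset.sum_congr rfl
          intro j hj
          simp only [Finset.mem_range] at hj
          have he : (y+k*z)^(n-1-j) = (y+k*z)^(k-1) * (y+k*z)^(n-k-j) := by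
            rw [← pow_add]
            congr 1
            omega
          rw [neg_pow, he]
          ring
      _ = ∑ j ∈ range (n+1), (n.choose k : ℝ) * ((n-k).choose j : ℝ) * (x+y)^j
            * (-1:ℝ)^(n-k-j) * y * (y+k*z)^(n-1-j) := by
          apply Finset.sum_subset (Finset.range_subset_range.mpr (by omega : n-k+1 ≤ n+1))
          intro j hj hnj
          simp only [Finset.mem_range] at hj hnj
          rw [Nat.choose_eq_zero_of_lt (show n - k < j by omega)]
          push_cast
          ring
  rw [Finset.sum_congr rfl hexp, Finset.sum_comm]
  have hinner : ∀ j ∈ range (n+1),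
      ∑ k ∈ Icc 1 n, (n.choose k : ℝ) * ((n-k).choose j : ℝ) * (x+y)^j
          * (-1:ℝ)^(n-k-j) * y * (y+k*z)^(n-1-j)
        = ((n.choose j : ℝ) * (x+y)^j * (-1:ℝ)^(n-j) * y)
            * ((if n-1-j = n-j then (-1:ℝ)^(n-j) * ((n-j).factorial : ℝ) * z^(n-j) else 0)
              - y^(n-1-j)) := by
    intro j hj
    simp only [Finset.mem_range] at hj
    have hj' : j ≤ n := by omega
    have step1 : ∀ k ∈ Icc 1 n,
        (n.choose k : ℝ) * ((n-k).choose j : ℝ) * (x+y)^j * (-1:ℝ)^(n-k-j) * y * (y+k*z)^(n-1-j)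
          = ((n.choose j : ℝ) * (x+y)^j * (-1:ℝ)^(n-j) * y)
              * ((-1:ℝ)^k * ((n-j).choose k : ℝ) * (y+k*z)^(n-1-j)) := by
      intro k hk
      simp only [Finset.mem_Icc] at hk
      obtain ⟨hk1, hk'⟩ := hk
      by_cases hkj : k + j ≤ n
      · have hcs : ((n.choose k : ℝ) * ((n-k).choose j : ℝ))
            = (n.choose j : ℝ) * ((n-j).choose k : ℝ) := by
          exact_mod_cast congrArg (Nat.cast (R := ℝ)) (choose_swap hk' hj')
        have hsign : (-1:ℝ)^(n-k-j) = (-1:ℝ)^(n-j) * (-1:ℝ)^k := by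
          have h1 : (-1:ℝ)^(n-k-j) * (-1:ℝ)^k = (-1:ℝ)^(n-j) := by
            rw [← pow_add, show n-k-j+k = n-j from by omega]
          have h2 : ((-1:ℝ)^k) * ((-1:ℝ)^k) = 1 := by
            rw [← pow_add]
            exact Even.neg_one_pow ⟨k, rfl⟩
          calc (-1:ℝ)^(n-k-j) = (-1:ℝ)^(n-k-j) * (((-1:ℝ)^k) * ((-1:ℝ)^k)) := by
                rw [h2]; ring
            _ = (-1:ℝ)^(n-j) * (-1:ℝ)^k := by rw [← mul_assoc, h1]
        rw [hsign]
        rw [show (n.choose k : ℝ) * ((n-k).choose j : ℝ) * (x+y)^j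
            * ((-1:ℝ)^(n-j) * (-1:ℝ)^k) * y * (y+k*z)^(n-1-j)
            = ((n.choose k : ℝ) * ((n-k).choose j : ℝ)) * ((x+y)^j
            * ((-1:ℝ)^(n-j) * (-1:ℝ)^k) * y * (y+k*z)^(n-1-j)) from by ring, hcs]
        ring
      · rw [Nat.choose_eq_zero_of_lt (show n - k < j by omega),
          Nat.choose_eq_zero_of_lt (show n - j < k by omega)]
        push_cast
        ring
    rw [Finset.sum_congr rfl step1, ← Finset.mul_sum]
    congr 1
    have hins : range (n+1) = insert 0 (Icc 1 n) := by
      ext a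
      simp only [Finset.mem_range, Finset.mem_insert, Finset.mem_Icc]
      omega
    have hsplit : ∑ k ∈ range (n+1), (-1:ℝ)^k * ((n-j).choose k : ℝ) * (y+k*z)^(n-1-j)
        = y^(n-1-j) + ∑ k ∈ Icc 1 n, (-1:ℝ)^k * ((n-j).choose k : ℝ) * (y+k*z)^(n-1-j) := by
      rw [hins, Finset.sum_insert (by simp)]
      simp
    have hfd : ∑ k ∈ range (n+1), (-1:ℝ)^k * ((n-j).choose k : ℝ) * (y+k*z)^(n-1-j)
        = if n-1-j = n-j then (-1:ℝ)^(n-j) * ((n-j).factorial : ℝ) * z^(n-j) else 0 := by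
      rw [show ∑ k ∈ range (n+1), (-1:ℝ)^k * ((n-j).choose k : ℝ) * (y+k*z)^(n-1-j)
          = ∑ k ∈ range (n-j+1), (-1:ℝ)^k * ((n-j).choose k : ℝ) * (y+k*z)^(n-1-j) from by
        symm
        apply Finset.sum_subset (Finset.range_subset_range.mpr (by omega : n-j+1 ≤ n+1))
        intro k hk hnk
        simp only [Finset.mem_range] at hk hnk
        rw [Nat.choose_eq_zero_of_lt (show n - j < k by omega)]
        push_cast
        ring]
      exact fd z (n-j) (n-1-j) (by omega) y
    rw [← hfd, hsplit]
    ring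
  rw [Finset.sum_congr rfl hinner]
  have hsplit2 : ∀ j ∈ range (n+1),
      ((n.choose j : ℝ) * (x+y)^j * (-1:ℝ)^(n-j) * y)
          * ((if n-1-j = n-j then (-1:ℝ)^(n-j) * ((n-j).factorial : ℝ) * z^(n-j) else 0)
            - y^(n-1-j))
        = -((x+y)^j * (-y)^(n-j) * (n.choose j : ℝ)) + (if j = n then (x+y)^n else 0) := by
    intro j hj
    simp only [Finset.mem_range] at hj
    by_cases hjn : j = n
    · subst hjn
      simp
    · have h1 : ¬ (n-1-j = n-j) := by omega
      rw [if_neg h1, if_neg hjn]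
      have h2 : (-y)^(n-j) = (-1:ℝ)^(n-j) * y^(n-j) := by rw [neg_pow]
      have h3 : y^(n-j) = y * y^(n-1-j) := by
        rw [← pow_succ']
        congr 1
        omega
      rw [h2, h3]
      ring
  rw [Finset.sum_congr rfl hsplit2, Finset.sum_add_distrib]
  rw [Finset.sum_ite_eq' (range (n+1)) n (fun _ => (x+y)^n)]
  simp only [Finset.self_mem_range_succ, if_true]
  have hx : x^n = ∑ j ∈ range (n+1), (x+y)^j * (-y)^(n-j) * (n.choose j : ℝ) := by
    have := add_pow (x+y) (-y) n
    simp only [add_neg_cancel_right] at this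
    exact this
  rw [Finset.sum_neg_distrib, ← hx]
  ring

/-- Density of the Abelian distribution with parameters `N` and `p`,
evaluated at `b`. -/
noncomputable def abelianP (N : ℕ) (p : ℝ) (b : ℕ) : ℝ :=
  ((1 - N * p) / (1 - ((N : ℝ) - 1) * p)) * ((N - 1).choose (b - 1)) *
    p ^ (b - 1) * (1 - b * p) ^ ((N : ℤ) - b - 1) * (b : ℝ) ^ ((b : ℤ) - 2)

theorem abelian_second_moment (N : ℕ) (hN : 0 < N) (p : ℝ)
    (hp : 0 < p) (hp' : p < 1 / N) :
    ∑ b ∈ Finset.Icc 1 N, (b : ℝ) ^ 2 * abelianP N p b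
      = (((1 - N * p) / (1 - ((N : ℝ) - 1) * p)) / p) *
          (1 / (1 - N * p) - 1
            - ∑ i ∈ Finset.Icc 1 (N - 1),
                (((N - 1).factorial : ℝ) / (N - 1 - i).factorial) * p ^ i) := by
  obtain ⟨n, rfl⟩ : ∃ n, N = n + 1 := ⟨N - 1, by omega⟩
  simp only [Nat.add_sub_cancel]
  set X : ℝ := ((n+1 : ℕ) : ℝ) * p with hX
  set Y : ℝ := 1 - ((n+1 : ℕ) : ℝ) * p with hYdef
  have hnp : ((n+1 : ℕ) : ℝ) > 0 := by positivity
  have hY : Y ≠ 0 := by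
    have : p * ((n+1 : ℕ) : ℝ) < 1 := (lt_div_iff₀ hnp).mp hp'
    rw [hYdef]
    nlinarith
  have hXY : X + Y = 1 := by rw [hX, hYdef]; ring
  set Cc : ℝ := (1 - ((n+1 : ℕ) : ℝ) * p) / (1 - (((n+1 : ℕ) : ℝ) - 1) * p) with hCc
  -- Step 1: rewrite the summand
  have hb2 : ∀ b ∈ Icc 1 (n+1), (b : ℝ)^2 * abelianP (n+1) p b
      = Cc * ((n.choose (b-1) : ℝ) * p^(b-1)
          * (1 - (b:ℝ)*p)^(((n+1 : ℕ) : ℤ) - (b : ℤ) - 1) * (b:ℝ)^(b:ℕ)) := by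
    intro b hb
    simp only [Finset.mem_Icc] at hb
    have hbne : (b : ℝ) ≠ 0 := by
      have : (0:ℝ) < (b:ℝ) := by exact_mod_cast hb.1
      linarith
    have hpow : (b:ℝ)^2 * (b:ℝ)^((b:ℤ)-2) = (b:ℝ)^(b:ℕ) := by
      have h1 : (b:ℝ)^2 = (b:ℝ)^((2:ℤ)) := by norm_cast
      rw [h1, ← zpow_add₀ hbne, show (2:ℤ) + ((b:ℤ)-2) = (b:ℤ) from by ring,
        zpow_natCast]
    rw [abelianP]
    simp only [Nat.add_sub_cancel]
    rw [← hpow]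
    ring
  rw [Finset.sum_congr rfl hb2, ← Finset.mul_sum]
  set S : ℝ := ∑ b ∈ Icc 1 (n+1), (n.choose (b-1) : ℝ) * p^(b-1)
      * (1 - (b:ℝ)*p)^(((n+1 : ℕ) : ℤ) - (b : ℤ) - 1) * (b:ℝ)^(b:ℕ) with hSdef
  -- auxiliary sums
  set A' : ℝ := ∑ k ∈ Icc 1 n, (n.choose k : ℝ) * (Y + k*p)^(k-1) * (X - k*p)^(n-k) with hA'def
  set B' : ℝ := ∑ k ∈ Icc 1 n, (n.choose k : ℝ) * (Y + k*p)^k * (X - k*p)^(n-k) with hB'def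
  set Fv : ℝ := ∑ i ∈ range (n+1), (n.choose i : ℝ) * (i.factorial : ℝ) * p^i with hFvdef
  have hA : Y * A' = 1 - X^n := by
    have := abelY n X Y p
    rw [hXY, one_pow] at this
    exact this
  have hB : X^n + B' = Fv := by
    have hF := Fsum n X Y p
    rw [hXY] at hF
    simp only [one_pow, mul_one] at hF
    rw [hFvdef, ← hF]
    have hins : range (n+1) = insert 0 (Icc 1 n) := by
      ext a
      simp only [Finset.mem_range, Finset.mem_insert, Finset.mem_Icc]
      omega
    have h0 : (0:ℕ) ∉ Icc 1 n := by simp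
    rw [hins, Finset.sum_insert h0, hB'def]
    simp
  -- the factorial sum is Fv - 1
  have hT : ∑ i ∈ Icc 1 n, ((n.factorial : ℝ) / ((n - i).factorial : ℝ)) * p ^ i
      = Fv - 1 := by
    have hins : range (n+1) = insert 0 (Icc 1 n) := by
      ext a
      simp only [Finset.mem_range, Finset.mem_insert, Finset.mem_Icc]
      omega
    rw [hFvdef, hins, Finset.sum_insert (by simp)]
    simp only [Nat.choose_zero_right, Nat.cast_one, Nat.factorial_zero, pow_zero, one_mul,
      mul_one]
    rw [add_sub_cancel_left]
    apply Finset.sum_congr rfl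
    intro i hi
    simp only [Finset.mem_Icc] at hi
    have hfact := Nat.choose_mul_factorial_mul_factorial (show i ≤ n from hi.2)
    have hfne : ((n-i).factorial : ℝ) ≠ 0 := by positivity
    have : (n.factorial : ℝ) = (n.choose i : ℝ) * (i.factorial : ℝ) * ((n-i).factorial : ℝ) := by
      exact_mod_cast hfact.symm
    rw [this]
    field_simp
  -- split off the top term of S
  have hStop : S = (∑ b ∈ Icc 1 n, (n.choose (b-1) : ℝ) * p^(b-1)
      * (1 - (b:ℝ)*p)^(((n+1 : ℕ) : ℤ) - (b : ℤ) - 1) * (b:ℝ)^(b:ℕ))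
      + p^n * ((n+1 : ℕ) : ℝ)^(n+1) * Y⁻¹ := by
    rw [hSdef, Finset.sum_Icc_succ_top (by omega : 1 ≤ n+1)]
    congr 1
    have he : ((n+1 : ℕ) : ℤ) - ((n+1 : ℕ) : ℤ) - 1 = -1 := by ring
    rw [Nat.add_sub_cancel, Nat.choose_self, he, zpow_neg_one, hYdef]
    push_cast
    ring
  -- convert zpow to pow in the lower part, and reindex
  have hlow : p * (∑ b ∈ Icc 1 n, (n.choose (b-1) : ℝ) * p^(b-1)
      * (1 - (b:ℝ)*p)^(((n+1 : ℕ) : ℤ) - (b : ℤ) - 1) * (b:ℝ)^(b:ℕ))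
      = ∑ k ∈ Icc 1 n, (n.choose k : ℝ) * (Y + k*p)^(k-1) * (X - k*p)^(n+1-k) := by
    rw [Finset.mul_sum]
    symm
    apply Finset.sum_nbij' (i := fun k => n+1-k) (j := fun b => n+1-b)
    · intro a ha
      simp only [Finset.mem_Icc] at ha ⊢
      omega
    · intro a ha
      simp only [Finset.mem_Icc] at ha ⊢
      omega
    · intro a ha
      simp only [Finset.mem_Icc] at ha
      omega
    · intro a ha
      simp only [Finset.mem_Icc] at ha
      omega
    · intro k hk
      simp only [Finset.mem_Icc] at hk
      obtain ⟨hk1, hk2⟩ := hk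
      -- index conversions
      have e1 : n+1-k-1 = n-k := by omega
      have e2 : (n.choose (n-k) : ℝ) = (n.choose k : ℝ) := by
        exact_mod_cast congrArg (Nat.cast (R := ℝ)) (Nat.choose_symm hk2)
      have e3 : ((n+1-k : ℕ) : ℝ) = ((n+1 : ℕ) : ℝ) - (k : ℝ) := by
        push_cast [Nat.cast_sub (show k ≤ n+1 by omega)]
        ring
      have e4 : (1 - ((n+1-k : ℕ) : ℝ)*p) = Y + k*p := by
        rw [e3, hYdef]; ring
      have e5 : (((n+1 : ℕ) : ℤ) - ((n+1-k : ℕ) : ℤ) - 1) = ((k-1 : ℕ) : ℤ) := by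
        push_cast [Nat.cast_sub (show k ≤ n+1 by omega),
          Nat.cast_sub (show 1 ≤ k by omega)]
        ring
      have e6 : ((n+1-k : ℕ) : ℝ) * p = X - k*p := by
        rw [e3, hX]; ring
      rw [e1, e2, e4, e5, zpow_natCast, ← e6]
      have e7 : (((n+1-k : ℕ) : ℝ) * p)^(n+1-k) = ((n+1-k : ℕ) : ℝ)^(n+1-k) * p^(n+1-k) := by
        rw [mul_pow]
      have e8 : p * p^(n-k) = p^(n+1-k) := by
        rw [← pow_succ']
        congr 1
        omega
      rw [e7, ← e8]
      ring
  -- split G' into A' - B'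
  have hG : ∑ k ∈ Icc 1 n, (n.choose k : ℝ) * (Y + k*p)^(k-1) * (X - k*p)^(n+1-k)
      = A' - B' := by
    rw [hA'def, hB'def, ← Finset.sum_sub_distrib]
    apply Finset.sum_congr rfl
    intro k hk
    simp only [Finset.mem_Icc] at hk
    obtain ⟨hk1, hk2⟩ := hk
    have e1 : (X - k*p)^(n+1-k) = (X - k*p)^(n-k) * (X - k*p) := by
      rw [← pow_succ]
      congr 1
      omega
    have e2 : X - k*p = 1 - (Y + k*p) := by rw [← hXY]; ring
    have e3 : (Y + k*p)^(k-1) * (Y + k*p) = (Y + k*p)^k := by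
      rw [← pow_succ]
      congr 1
      omega
    rw [e1]
    calc (n.choose k : ℝ) * (Y + k*p)^(k-1) * ((X - k*p)^(n-k) * (X - k*p))
        = (n.choose k : ℝ) * (Y + k*p)^(k-1) * (X - k*p)^(n-k)
          - (n.choose k : ℝ) * ((Y + k*p)^(k-1) * (Y + k*p)) * (X - k*p)^(n-k) := by
          rw [e2]
          ring
      _ = (n.choose k : ℝ) * (Y + k*p)^(k-1) * (X - k*p)^(n-k)
          - (n.choose k : ℝ) * (Y + k*p)^k * (X - k*p)^(n-k) := by rw [e3]
  rw [hT]
  have hpS : p * S = 1/Y - 1 - (Fv - 1) := by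
    rw [hStop, mul_add, hlow, hG]
    have hA'v : A' = Y⁻¹ * (1 - X^n) := by
      rw [← hA, inv_mul_cancel_left₀ hY]
    have hB'v : B' = Fv - X^n := by linarith [hB]
    have hXp : p * (p^n * ((n+1:ℕ):ℝ)^(n+1) * Y⁻¹) = X^(n+1) * Y⁻¹ := by
      rw [hX, mul_pow]
      ring
    rw [hA'v, hB'v, hXp]
    field_simp
    linear_combination (X^n) * Y * hXY
  calc Cc * S = Cc / p * (p * S) := by
        field_simp
      _ = Cc / p * (1/Y - 1 - (Fv - 1)) := by rw [hpS]
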